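/- Let a₀ ∈ {0,…,9} and Y = 10^k. Define F_Y(θ) = (1/9^k)|Σ_{n<Y, n has no digit a₀} e(nθ)|. Suppose q < Y^{1/3} can be written q = q₁q₂ with gcd(q₁,10) = 1 and q₁ > 1, and |η| < Y^{−2/3}/2. Then for any integer a coprime to q, F_Y(a/q + η) ≤ C·exp(−c·log Y / log q) for absolute constants C, c > 0. -/

import Mathlib

set_option maxHeartbeats 1000000

/-- `e(x) = exp(2πix)`. -/
noncomputable def e (x : ℝ) : ℂ := Complex.exp (2 * Real.pi * Complex.I * x)

/-- The normalized Fourier transform `F_{10^k}(θ)` of the integers below `10^k`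
all of whose `k` base-10 digits (leading zeros allowed) differ from `a₀`. -/
noncomputable def F (a₀ k : ℕ) (θ : ℝ) : ℝ :=
  (1 / 9^k : ℝ) *
    ‖(∑ n ∈ (Finset.range (10^k)).filter (fun n => ∀ i < k, n / 10^i % 10 ≠ a₀),
      e ((n : ℝ) * θ))‖

lemma e_add (x y : ℝ) : e (x + y) = e x * e y := by
  simp [e, ← Complex.exp_add]; ring_nf

lemma e_abs (x : ℝ) : ‖e x‖ = 1 := by
  simp [e]
  rw [show (2 * (Real.pi:ℂ) * Complex.I * x) = ((2 * Real.pi * x : ℝ) : ℂ) * Complex.I by push_cast; ring]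
  exact Complex.norm_exp_ofReal_mul_I _

lemma e_nat_mul (d : ℕ) (x : ℝ) : e ((d : ℝ) * x) = (e x) ^ d := by
  simp [e, ← Complex.exp_nat_mul]; ring_nf

/-- distance to nearest integer -/
noncomputable def nrm (x : ℝ) : ℝ := |x - round x|

lemma nrm_nonneg (x : ℝ) : 0 ≤ nrm x := abs_nonneg _
lemma nrm_le_half (x : ℝ) : nrm x ≤ 1/2 := abs_sub_round x

lemma nrm_ten_mul {u : ℝ} (h : nrm u < 1/20) : nrm (10 * u) = 10 * nrm u := by
  have h' : |u - (round u : ℝ)| < 1/20 := h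
  have hr : round (10 * u) = 10 * round u := by
    have h10 : (10 : ℝ) * u = 10 * (u - round u) + (10 * round u : ℤ) := by push_cast; ring
    rw [h10, round_add_intCast]
    have h0 : round ((10:ℝ) * (u - round u)) = 0 := by
      rw [round_eq_zero_iff]
      constructor
      · have := neg_abs_le (u - (round u : ℝ)); linarith
      · have := le_abs_self (u - (round u : ℝ)); linarith
    rw [h0]; push_cast; ring
  unfold nrm
  rw [hr]
  push_cast
  rw [show (10:ℝ) * u - 10 * round u = 10 * (u - round u) by ring, abs_mul]
  norm_num

/-- |sin(π t)| ≥ 1/7 when t is at distance ≥ 1/20 from the integers -/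
lemma sin_lower {t : ℝ} (h : 1/20 ≤ nrm t) : 1/7 ≤ |Real.sin (Real.pi * t)| := by
  set v := t - (round t : ℝ) with hv
  have hvlo : 1/20 ≤ |v| := h
  have hvhi : |v| ≤ 1/2 := nrm_le_half t
  have habs : |Real.sin (Real.pi * t)| = |Real.sin (Real.pi * v)| := by
    have hsplit : Real.pi * t = (round t : ℝ) * Real.pi + Real.pi * v := by rw [hv]; ring
    rw [hsplit, Real.sin_add, Real.sin_int_mul_pi, zero_mul, zero_add, abs_mul,
      Real.abs_cos_int_mul_pi, one_mul]
  rw [habs]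
  have h1 : |Real.sin (Real.pi * v)| = Real.sin (Real.pi * |v|) := by
    rcases abs_cases v with ⟨he, h0⟩ | ⟨he, hneg⟩
    · rw [he]
      apply abs_of_nonneg
      apply Real.sin_nonneg_of_nonneg_of_le_pi
      · positivity
      · nlinarith [Real.pi_pos]
    · rw [he, show Real.pi * -v = -(Real.pi * v) by ring, Real.sin_neg]
      rw [abs_of_nonpos]
      apply Real.sin_nonpos_of_nonpos_of_neg_pi_le
      · nlinarith [Real.pi_pos]
      · nlinarith [Real.pi_pos, abs_le.mp hvhi]
  rw [h1]
  have mono : Real.sin (Real.pi * (1/20)) ≤ Real.sin (Real.pi * |v|) := by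
    apply Real.sin_le_sin_of_le_of_le_pi_div_two
    · nlinarith [Real.pi_pos]
    · nlinarith [Real.pi_pos]
    · nlinarith [Real.pi_pos]
  have hlow : 1/7 ≤ Real.sin (Real.pi * (1/20)) := by
    have hx : (0:ℝ) < Real.pi * (1/20) := by positivity
    have hx1 : Real.pi * (1/20) ≤ 1 := by nlinarith [Real.pi_lt_d2]
    have hcube := Real.sin_gt_sub_cube hx
    have hc : (Real.pi * (1/20))^3 ≤ (3.15 * (1/20))^3 := by
      apply pow_le_pow_left₀ (by positivity)
      nlinarith [Real.pi_lt_d2]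
    nlinarith [Real.pi_gt_d6]
  linarith

/-- |e(t) - 1| = 2|sin(π t)| -/
lemma abs_e_sub_one (t : ℝ) : ‖e t - 1‖ = 2 * |Real.sin (Real.pi * t)| := by
  have he : e t = Complex.exp (((2 * Real.pi * t : ℝ) : ℂ) * Complex.I) := by
    unfold e; congr 1; push_cast; ring
  rw [he, Complex.exp_mul_I]
  have hrw : Complex.cos ((2 * Real.pi * t : ℝ) : ℂ) + Complex.sin ((2 * Real.pi * t : ℝ):ℂ) * Complex.I - 1
      = Complex.ofReal (Real.cos (2 * Real.pi * t) - 1) + Complex.ofReal (Real.sin (2 * Real.pi * t)) * Complex.I := by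
    push_cast
    ring
  rw [hrw, Complex.norm_def, Complex.normSq_add_mul_I]
  have hcos : Real.cos (2 * Real.pi * t) = 1 - 2 * Real.sin (Real.pi * t) ^ 2 := by
    rw [show 2 * Real.pi * t = 2 * (Real.pi * t) by ring, Real.cos_two_mul]
    nlinarith [Real.sin_sq_add_cos_sq (Real.pi * t)]
  have h2 : Real.sin (2 * Real.pi * t) = 2 * Real.sin (Real.pi * t) * Real.cos (Real.pi * t) := by
    rw [show 2 * Real.pi * t = 2 * (Real.pi * t) by ring, Real.sin_two_mul]
  have hsq : (Real.cos (2 * Real.pi * t) - 1)^2 + Real.sin (2 * Real.pi * t)^2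
      = (2 * |Real.sin (Real.pi * t)|)^2 := by
    rw [hcos, h2]
    nlinarith [Real.sin_sq_add_cos_sq (Real.pi * t), sq_abs (Real.sin (Real.pi * t))]
  rw [hsq, Real.sqrt_sq (by positivity)]

/-- full geometric sum bound -/
lemma full_sum_le {t : ℝ} (h : 1/20 ≤ nrm t) :
    ‖∑ d ∈ Finset.range 10, e ((d:ℝ) * t)‖ ≤ 7 := by
  have hsin := sin_lower h
  have hne : e t ≠ 1 := by
    intro hcontra
    have h0 := abs_e_sub_one t
    rw [hcontra, sub_self, norm_zero] at h0
    nlinarith [abs_nonneg (Real.sin (Real.pi * t))]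
  have hsum : ∑ d ∈ Finset.range 10, e ((d:ℝ) * t) = ((e t)^10 - 1) / (e t - 1) := by
    rw [← geom_sum_eq hne]
    apply Finset.sum_congr rfl
    intro d _
    exact e_nat_mul d t
  rw [hsum, norm_div, abs_e_sub_one t]
  have hnum : ‖(e t)^10 - 1‖ ≤ 2 := by
    have h1 := norm_sub_le_norm_sub_add_norm_sub ((e t)^10) 0 1
    rw [sub_zero, zero_sub] at h1
    rw [norm_pow, e_abs, norm_neg, norm_one] at h1
    norm_num at h1
    linarith
  have hden : (2:ℝ) * (1/7) ≤ 2 * |Real.sin (Real.pi * t)| := by linarith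
  calc ‖(e t)^10 - 1‖ / (2 * |Real.sin (Real.pi * t)|)
      ≤ 2 / (2 * (1/7)) := div_le_div₀ (by norm_num) hnum (by norm_num) hden
  _ = 7 := by norm_num

/-- restricted digit sum bounds -/
lemma T_le_nine (a₀ : ℕ) (t : ℝ) (ha : a₀ ≤ 9) :
    ‖∑ d ∈ (Finset.range 10).filter (fun d => d ≠ a₀), e ((d:ℝ) * t)‖ ≤ 9 := by
  calc ‖∑ d ∈ (Finset.range 10).filter (fun d => d ≠ a₀), e ((d:ℝ) * t)‖
      ≤ ∑ d ∈ (Finset.range 10).filter (fun d => d ≠ a₀), ‖e ((d:ℝ) * t)‖ :=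
        norm_sum_le _ _
  _ = (Finset.card ((Finset.range 10).filter (fun d => d ≠ a₀)) : ℝ) := by
        simp [e_abs]
  _ ≤ 9 := by
        have : (Finset.range 10).filter (fun d => d ≠ a₀) = (Finset.range 10).erase a₀ := by
          ext x; simp [Finset.mem_erase, and_comm]
        rw [this, Finset.card_erase_of_mem (by simp; omega)]
        simp

lemma T_le_eight {a₀ : ℕ} {t : ℝ} (ha : a₀ ≤ 9) (h : 1/20 ≤ nrm t) :
    ‖∑ d ∈ (Finset.range 10).filter (fun d => d ≠ a₀), e ((d:ℝ) * t)‖ ≤ 8 := by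
  have hmem : a₀ ∈ Finset.range 10 := by simp; omega
  have hfe : (Finset.range 10).filter (fun d => d ≠ a₀) = (Finset.range 10).erase a₀ := by
    ext x; simp [Finset.mem_erase, and_comm]
  have hsplit : ∑ d ∈ (Finset.range 10).erase a₀, e ((d:ℝ) * t)
      = (∑ d ∈ Finset.range 10, e ((d:ℝ) * t)) - e ((a₀:ℝ) * t) := by
    rw [eq_sub_iff_add_eq, Finset.sum_erase_add _ _ hmem]
  rw [hfe, hsplit]
  calc ‖(∑ d ∈ Finset.range 10, e ((d:ℝ) * t)) - e ((a₀:ℝ) * t)‖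
      ≤ ‖∑ d ∈ Finset.range 10, e ((d:ℝ) * t)‖ + ‖e ((a₀:ℝ) * t)‖ := by
        have h1 := norm_sub_le_norm_sub_add_norm_sub (∑ d ∈ Finset.range 10, e ((d:ℝ) * t)) 0 (e ((a₀:ℝ) * t))
        rw [sub_zero, zero_sub, norm_neg] at h1
        exact h1
  _ ≤ 7 + 1 := by
        have := full_sum_le h
        rw [e_abs]
        linarith
  _ = 8 := by norm_num


lemma sum_factor (a₀ : ℕ) : ∀ (k : ℕ) (θ : ℝ),
    ∑ n ∈ (Finset.range (10^k)).filter (fun n => ∀ i < k, n / 10^i % 10 ≠ a₀), e ((n:ℝ) * θ)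
    = ∏ i ∈ Finset.range k,
        ∑ d ∈ (Finset.range 10).filter (fun d => d ≠ a₀), e ((d:ℝ) * (10^i * θ)) := by
  intro k
  induction k with
  | zero => intro θ; simp [e]
  | succ k ih =>
    intro θ
    rw [Finset.prod_range_succ']
    have key : ∑ n ∈ (Finset.range (10^(k+1))).filter (fun n => ∀ i < k+1, n / 10^i % 10 ≠ a₀),
          e ((n:ℝ) * θ)
        = ∑ p ∈ ((Finset.range 10).filter (fun d => d ≠ a₀)) ×ˢ
              ((Finset.range (10^k)).filter (fun m => ∀ i < k, m / 10^i % 10 ≠ a₀)),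
            e ((p.1:ℝ) * θ) * e ((p.2:ℝ) * (10 * θ)) := by
      refine Finset.sum_nbij' (fun n => (n % 10, n / 10)) (fun p => p.1 + 10 * p.2) ?_ ?_ ?_ ?_ ?_
      · intro n hn
        simp only [Finset.mem_filter, Finset.mem_range] at hn
        obtain ⟨hlt, hd⟩ := hn
        rw [Finset.mem_product]
        constructor <;> simp only [Finset.mem_filter, Finset.mem_range]
        · exact ⟨Nat.mod_lt _ (by norm_num), by simpa using hd 0 (by omega)⟩
        · constructor
          · exact Nat.div_lt_of_lt_mul (by rw [pow_succ] at hlt; linarith)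
          · intro i hi
            have := hd (i+1) (by omega)
            rwa [pow_succ, mul_comm (10^i) 10, ← Nat.div_div_eq_div_mul] at this
      · intro p hp
        rw [Finset.mem_product] at hp
        simp only [Finset.mem_filter, Finset.mem_range] at hp
        obtain ⟨⟨h1, h2⟩, h3, h4⟩ := hp
        simp only [Finset.mem_filter, Finset.mem_range]
        constructor
        · rw [pow_succ]; omega
        · intro i hi
          rcases Nat.eq_zero_or_pos i with rfl | hpos
          · simpa [Nat.add_mul_mod_self_left, Nat.mod_eq_of_lt h1] using h2
          · obtain ⟨j, rfl⟩ := Nat.exists_eq_add_of_le hpos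
            have h5 : (p.1 + 10 * p.2) / 10 ^ (1 + j) = p.2 / 10 ^ j := by
              rw [pow_add, pow_one, ← Nat.div_div_eq_div_mul]
              congr 1
              omega
            rw [h5]
            exact h4 j (by omega)
      · intro n hn; simp only; omega
      · intro p hp
        rw [Finset.mem_product] at hp
        simp only [Finset.mem_filter, Finset.mem_range] at hp
        obtain ⟨⟨h1, _⟩, _, _⟩ := hp
        have e1 : (p.1 + 10 * p.2) % 10 = p.1 := by omega
        have e2 : (p.1 + 10 * p.2) / 10 = p.2 := by omega
        simp only [e1, e2]
      · intro n hn
        rw [← e_add]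
        simp only
        congr 1
        have h0 : 10 * (n / 10) + n % 10 = n := Nat.div_add_mod n 10
        have : (10:ℝ) * ((n / 10 : ℕ) : ℝ) + ((n % 10 : ℕ) : ℝ) = (n : ℝ) := by
          exact_mod_cast congrArg (Nat.cast : ℕ → ℝ) h0
        linear_combination -θ * this
    rw [key, Finset.sum_product]
    simp only [← Finset.sum_mul, ← Finset.mul_sum]
    rw [ih (10 * θ)]
    rw [mul_comm]
    congr 1
    · apply Finset.prod_congr rfl
      intro i _
      apply Finset.sum_congr rfl
      intro d _
      congr 1
      push_cast
      ring
    · apply Finset.sum_congr rfl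
      intro d _
      congr 1
      push_cast
      ring


lemma theta_far (q : ℕ) (hq : 2 ≤ q) (m : ℤ) (hnd : ¬ (q:ℤ) ∣ m) (ε : ℝ)
    (hε : |ε| ≤ 1/(2*q)) : 1/(2*(q:ℝ)) ≤ nrm ((m:ℝ)/q + ε) := by
  have hq0 : (0:ℝ) < q := by positivity
  set r := round ((m:ℝ)/q + ε) with hr
  have hfar : 1/(q:ℝ) ≤ |(m:ℝ)/q - r| := by
    have hne : m - r * q ≠ 0 := by
      intro hcontra
      apply hnd
      exact ⟨r, by linarith [sub_eq_zero.mp hcontra]⟩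
    have h1 : (1:ℝ) ≤ |((m - r*q : ℤ) : ℝ)| := by
      rw [← Int.cast_abs]
      exact_mod_cast Int.one_le_abs hne
    have h2 : |(m:ℝ)/q - r| = |((m - r*q : ℤ) : ℝ)| / q := by
      rw [show ((m - r*q : ℤ) : ℝ) = (m:ℝ) - r * q by push_cast; ring]
      rw [← abs_of_pos hq0, ← abs_div]
      congr 1
      field_simp
      rw [abs_of_pos hq0]
      ring
    rw [h2]
    exact (div_le_div_iff_of_pos_right hq0).mpr h1
  have : |(m:ℝ)/q + ε - r| ≥ |(m:ℝ)/q - r| - |ε| := by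
    have := abs_sub_abs_le_abs_sub ((m:ℝ)/q - r) (-ε)
    have h3 : (m:ℝ)/q - r - -ε = (m:ℝ)/q + ε - r := by ring
    rw [h3] at this
    linarith [abs_neg ε ▸ this]
  have hhalf : 1/(2*(q:ℝ)) + 1/(2*(q:ℝ)) = 1/(q:ℝ) := by
    rw [← add_div]
    rw [show (1:ℝ)+1 = 2 by norm_num]
    rw [div_eq_div_iff (by positivity) (ne_of_gt hq0)]
    ring
  unfold nrm
  rw [← hr]
  linarith

lemma escape (x : ℝ) (q L : ℕ) (hq : 2 ≤ q) (hL : 20 * q ≤ 10^L)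
    (h : 1/(2*(q:ℝ)) ≤ nrm x) : ∃ s ≤ L, 1/20 ≤ nrm ((10:ℝ)^s * x) := by
  by_contra hcon
  push_neg at hcon
  have claim : ∀ s, s ≤ L → (10:ℝ)^s/(2*q) ≤ nrm ((10:ℝ)^s * x) := by
    intro s
    induction s with
    | zero => intro _; simpa using h
    | succ s ih =>
      intro hs
      have hs' : s ≤ L := Nat.le_of_succ_le hs
      have h1 := ih hs'
      have h2 : nrm ((10:ℝ)^s * x) < 1/20 := hcon s hs'
      have h3 : nrm ((10:ℝ)^(s+1) * x) = 10 * nrm ((10:ℝ)^s * x) := by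
        rw [show (10:ℝ)^(s+1) * x = 10 * ((10:ℝ)^s * x) by ring]
        exact nrm_ten_mul h2
      rw [h3, pow_succ]
      have hq0 : (0:ℝ) < q := by positivity
      rw [div_le_iff₀ (by positivity)] at *
      nlinarith
  have hfin := claim L le_rfl
  have hcL := hcon L le_rfl
  have hq0 : (0:ℝ) < q := by positivity
  have h10 : (20:ℝ) * q ≤ (10:ℝ)^L := by exact_mod_cast hL
  have : (10:ℝ) ≤ (10:ℝ)^L / (2*q) := by
    rw [le_div_iff₀ (by positivity)]
    linarith
  linarith

lemma not_dvd_pow_mul (q₁ q₂ : ℕ) (a : ℤ) (i : ℕ) (hgcd : Nat.gcd q₁ 10 = 1)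
    (hq₁ : 1 < q₁) (hco : IsCoprime a ((q₁ * q₂ : ℕ) : ℤ)) :
    ¬ ((q₁ * q₂ : ℕ) : ℤ) ∣ 10^i * a := by
  intro hdvd
  have hq1d : ((q₁:ℕ) : ℤ) ∣ ((q₁ * q₂ : ℕ) : ℤ) := by exact_mod_cast Dvd.intro q₂ rfl
  have hdvd1 : ((q₁:ℕ) : ℤ) ∣ 10^i * a := dvd_trans hq1d hdvd
  have hcop10 : IsCoprime ((q₁:ℕ) : ℤ) ((10:ℤ)^i) := by
    rw [Int.isCoprime_iff_gcd_eq_one]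
    have : Nat.Coprime q₁ (10^i) := (Nat.coprime_iff_gcd_eq_one.mpr hgcd).pow_right i
    simpa [Int.gcd, Int.natAbs_pow] using this
  have hdvda : ((q₁:ℕ) : ℤ) ∣ a := by
    refine (IsCoprime.dvd_of_dvd_mul_left hcop10 ?_)
    exact hdvd1
  have hcopa : IsCoprime ((q₁:ℕ) : ℤ) a := ((hco.of_isCoprime_of_dvd_right hq1d)).symm
  have : IsUnit ((q₁:ℕ) : ℤ) := hcopa.isUnit_of_dvd' dvd_rfl hdvda
  rw [Int.isUnit_iff] at this
  rcases this with h | h <;> omega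


theorem stmt_5 : ∃ C c : ℝ, 0 < C ∧ 0 < c ∧
    ∀ (a₀ k q₁ q₂ : ℕ) (η : ℝ) (a : ℤ),
      a₀ ≤ 9 → 0 < q₂ → Nat.gcd q₁ 10 = 1 → 1 < q₁ →
      ((q₁ * q₂ : ℕ) : ℝ) < ((10 : ℝ)^k) ^ ((1 : ℝ)/3) →
      |η| < ((10 : ℝ)^k) ^ (-(2 : ℝ)/3) / 2 →
      IsCoprime a ((q₁ * q₂ : ℕ) : ℤ) →
      F a₀ k ((a : ℝ) / ((q₁ * q₂ : ℕ) : ℝ) + η)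
        ≤ C * Real.exp (-c * Real.log ((10 : ℝ)^k) / Real.log ((q₁ * q₂ : ℕ) : ℝ)) := by
  refine ⟨3, 1/501, by norm_num, by norm_num, ?_⟩
  intro a₀ k q₁ q₂ η a ha₀ hq₂ hgcd hq₁ hqY hη hco
  set q : ℕ := q₁ * q₂ with hqdef
  have hq2 : 2 ≤ q := by
    have : 1 ≤ q₂ := hq₂
    calc 2 ≤ q₁ * 1 := by omega
    _ ≤ q₁ * q₂ := by exact Nat.mul_le_mul_left q₁ this
  have hqR : (2:ℝ) ≤ (q:ℝ) := by exact_mod_cast hq2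
  have hqpos : (0:ℝ) < q := by linarith
  set θ : ℝ := (a : ℝ) / (q : ℝ) + η with hθ
  set ℓ : ℝ := Real.log q with hℓdef
  clear_value ℓ
  -- log facts
  have hlog2lo : (0.6931471803 : ℝ) < Real.log 2 := Real.log_two_gt_d9
  have hlog2hi : Real.log 2 < 0.6931471808 := Real.log_two_lt_d9
  have hℓlo : Real.log 2 ≤ ℓ := hℓdef ▸ Real.log_le_log (by norm_num) hqR
  have hℓpos : 0 < ℓ := by linarith
  have hlog10hi : Real.log 10 < 2.7725888 := by
    have h16 : Real.log 10 ≤ Real.log 16 := Real.log_le_log (by norm_num) (by norm_num)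
    have : Real.log 16 = 4 * Real.log 2 := by
      rw [show (16:ℝ) = 2^4 by norm_num, Real.log_pow]; push_cast; ring
    linarith
  have hlog10lo : (2:ℝ) < Real.log 10 := by
    have h8 : Real.log 8 ≤ Real.log 10 := Real.log_le_log (by norm_num) (by norm_num)
    have : Real.log 8 = 3 * Real.log 2 := by
      rw [show (8:ℝ) = 2^3 by norm_num, Real.log_pow]; push_cast; ring
    linarith
  have hlogYeq : Real.log ((10:ℝ)^k) = (k:ℝ) * Real.log 10 := by
    rw [Real.log_pow]
  -- rpow rewrites
  have hY13 : ((10:ℝ)^k) ^ ((1:ℝ)/3) = (10:ℝ) ^ ((k:ℝ)/3) := by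
    rw [← Real.rpow_natCast (10:ℝ) k, ← Real.rpow_mul (by norm_num)]
    congr 1
    ring
  have hY23 : ((10:ℝ)^k) ^ (-(2:ℝ)/3) = (10:ℝ) ^ (-(2*(k:ℝ))/3) := by
    rw [← Real.rpow_natCast (10:ℝ) k, ← Real.rpow_mul (by norm_num)]
    congr 1
    ring
  -- the key factorization
  have hfact : F a₀ k θ = (1/9^k : ℝ) * ∏ i ∈ Finset.range k,
      ‖∑ d ∈ (Finset.range 10).filter (fun d => d ≠ a₀), e ((d:ℝ) * (10^i * θ))‖ := by
    unfold F
    rw [sum_factor, norm_prod]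
  have hTnonneg : ∀ i : ℕ, 0 ≤ ‖∑ d ∈ (Finset.range 10).filter (fun d => d ≠ a₀),
      e ((d:ℝ) * (10^i * θ))‖ := fun i => norm_nonneg _
  have hF1 : F a₀ k θ ≤ 1 := by
    rw [hfact]
    have hprod : ∏ i ∈ Finset.range k,
        ‖∑ d ∈ (Finset.range 10).filter (fun d => d ≠ a₀), e ((d:ℝ) * (10^i * θ))‖
        ≤ ∏ _i ∈ Finset.range k, (9:ℝ) := by
      apply Finset.prod_le_prod (fun i _ => hTnonneg i) (fun i _ => T_le_nine a₀ _ ha₀)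
    rw [Finset.prod_const, Finset.card_range] at hprod
    have h9pos : (0:ℝ) < 9^k := by positivity
    calc (1/9^k : ℝ) * ∏ i ∈ Finset.range k,
        ‖∑ d ∈ (Finset.range 10).filter (fun d => d ≠ a₀), e ((d:ℝ) * (10^i * θ))‖
        ≤ (1/9^k : ℝ) * 9^k := by
          apply mul_le_mul_of_nonneg_left hprod (by positivity)
    _ = 1 := by field_simp
  by_cases hk : k ≤ 9
  · -- small k : trivial bound suffices
    have hexp1 : Real.exp 1 < 3 := by
      have := Real.exp_one_lt_d9
      linarith
    have hu : (1/501 : ℝ) * Real.log ((10:ℝ)^k) / ℓ ≤ 1 := by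
      rw [div_le_one hℓpos, hlogYeq]
      have hk9 : (k:ℝ) ≤ 9 := by exact_mod_cast hk
      nlinarith [Real.log_nonneg (show (1:ℝ) ≤ 10 by norm_num)]
    have hu0 : 0 ≤ (1/501 : ℝ) * Real.log ((10:ℝ)^k) / ℓ := by
      apply div_nonneg _ (le_of_lt hℓpos)
      rw [hlogYeq]
      have := Real.log_nonneg (show (1:ℝ) ≤ 10 by norm_num)
      positivity
    have hRHS : 1 ≤ 3 * Real.exp (-(1/501) * Real.log ((10:ℝ)^k) / ℓ) := by
      have harg : -(1:ℝ) ≤ -(1/501) * Real.log ((10:ℝ)^k) / ℓ := by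
        rw [show -(1/501 : ℝ) * Real.log ((10:ℝ)^k) / ℓ
            = -((1/501 : ℝ) * Real.log ((10:ℝ)^k) / ℓ) by ring]
        linarith
      have := Real.exp_le_exp.mpr harg
      have hexpneg1 : (1/3 : ℝ) ≤ Real.exp (-1) := by
        rw [Real.exp_neg]
        rw [le_inv_comm₀ (by norm_num) (Real.exp_pos 1)]
        linarith
      linarith
    calc F a₀ k θ ≤ 1 := hF1
    _ ≤ 3 * Real.exp (-(1/501) * Real.log ((10:ℝ)^k) / ℓ) := hRHS
  · push_neg at hk  -- 9 < k
    -- setup block structure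
    set I : ℕ := k / 3 with hIdef
    set L : ℕ := Nat.log 10 q + 3 with hLdef
    set B : ℕ := I / (L + 1) + 1 with hBdef
    clear_value B
    have hq0 : q ≠ 0 := by omega
    have hLpow : 20 * q ≤ 10 ^ L := by
      have h1 : q < 10 ^ (Nat.log 10 q + 1) := Nat.lt_pow_succ_log_self (by norm_num) q
      calc 20 * q ≤ 100 * q := by omega
      _ ≤ 100 * 10 ^ (Nat.log 10 q + 1) := by omega
      _ = 10 ^ (Nat.log 10 q + 3) := by ring
    -- every i ≤ I is "far"
    have hfar : ∀ i ≤ I, 1/(2*(q:ℝ)) ≤ nrm ((10:ℝ)^i * θ) := by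
      intro i hi
      have hrw : (10:ℝ)^i * θ = ((10^i * a : ℤ) : ℝ) / q + (10:ℝ)^i * η := by
        rw [hθ]; push_cast; ring
      rw [hrw]
      apply theta_far q hq2 _ (not_dvd_pow_mul q₁ q₂ a i hgcd hq₁ hco)
      -- |10^i η| ≤ 1/(2q)
      have h10i : (10:ℝ)^i ≤ (10:ℝ)^((k:ℝ)/3) := by
        rw [← Real.rpow_natCast (10:ℝ) i]
        apply Real.rpow_le_rpow_of_exponent_le (by norm_num)
        have : 3 * i ≤ k := by omega
        have := (Nat.cast_le (α := ℝ)).mpr this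
        push_cast at this
        linarith
      have hqY' : (q:ℝ) < (10:ℝ)^((k:ℝ)/3) := by rw [← hY13]; exact hqY
      have hη' : |η| < (10:ℝ)^(-(2*(k:ℝ))/3) / 2 := by rw [← hY23]; exact hη
      have hid : (10:ℝ)^((k:ℝ)/3) * ((10:ℝ)^((k:ℝ)/3) * (10:ℝ)^(-(2*(k:ℝ))/3)) = 1 := by
        rw [← Real.rpow_add (by norm_num), ← Real.rpow_add (by norm_num)]
        rw [show (k:ℝ)/3 + ((k:ℝ)/3 + -(2*(k:ℝ))/3) = 0 by ring, Real.rpow_zero]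
      have hpos1 : (0:ℝ) < (10:ℝ)^((k:ℝ)/3) := Real.rpow_pos_of_pos (by norm_num) _
      have hpos2 : (0:ℝ) < (10:ℝ)^(-(2*(k:ℝ))/3) := Real.rpow_pos_of_pos (by norm_num) _
      have h10ipos : (0:ℝ) < (10:ℝ)^i := by positivity
      rw [abs_mul, abs_of_pos h10ipos]
      rw [le_div_iff₀ (by positivity)]
      -- goal : 10^i * |η| * (2 * q) ≤ 1
      have step : (10:ℝ)^i * |η| * (2 * q) ≤ (10:ℝ)^((k:ℝ)/3) * ((10:ℝ)^(-(2*(k:ℝ))/3)/2) * (2 * (10:ℝ)^((k:ℝ)/3)) := by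
        apply mul_le_mul
        · apply mul_le_mul h10i (le_of_lt hη') (abs_nonneg η) (le_of_lt hpos1)
        · linarith
        · positivity
        · positivity
      calc (10:ℝ)^i * |η| * (2 * q) ≤ (10:ℝ)^((k:ℝ)/3) * ((10:ℝ)^(-(2*(k:ℝ))/3)/2) * (2 * (10:ℝ)^((k:ℝ)/3)) := step
      _ = (10:ℝ)^((k:ℝ)/3) * ((10:ℝ)^((k:ℝ)/3) * (10:ℝ)^(-(2*(k:ℝ))/3)) := by ring
      _ = 1 := hid
    -- Nat.log 10 q ≤ k/3
    have hlogk : 3 * Nat.log 10 q < k := by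
      have hpowlog : (10:ℕ)^(Nat.log 10 q) ≤ q := Nat.pow_log_le_self 10 hq0
      have hpowlogR : (10:ℝ)^(Nat.log 10 q) ≤ (q:ℝ) := by exact_mod_cast hpowlog
      have hqY' : (q:ℝ) < (10:ℝ)^((k:ℝ)/3) := by rw [← hY13]; exact hqY
      have : (10:ℝ)^((Nat.log 10 q : ℕ):ℝ) < (10:ℝ)^((k:ℝ)/3) := by
        rw [Real.rpow_natCast]
        linarith
      have hlt := (Real.rpow_lt_rpow_left_iff (x := (10:ℝ)) (by norm_num)).mp this
      have : (3 * Nat.log 10 q : ℝ) < k := by push_cast; linarith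
      exact_mod_cast this
    -- choose good indices
    have hblock : ∀ b, b < B → ∃ j, b * (L+1) ≤ j ∧ j ≤ b * (L+1) + L ∧
        1/20 ≤ nrm ((10:ℝ)^j * θ) := by
      intro b hb
      have hbI : b * (L+1) ≤ I := by
        have hble : b ≤ I / (L+1) := by
          rw [hBdef] at hb; omega
        calc b * (L+1) ≤ (I / (L+1)) * (L+1) := Nat.mul_le_mul_right _ hble
        _ ≤ I := Nat.div_mul_le_self I (L+1)
      obtain ⟨s, hsL, hs⟩ := escape ((10:ℝ)^(b*(L+1)) * θ) q L hq2 hLpow (hfar _ hbI)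
      refine ⟨b*(L+1) + s, Nat.le_add_right _ _, by omega, ?_⟩
      have : (10:ℝ)^s * ((10:ℝ)^(b*(L+1)) * θ) = (10:ℝ)^(b*(L+1)+s) * θ := by
        rw [pow_add]; ring
      rwa [this] at hs
    choose f hf1 hf2 hf3 using hblock
    set g : ℕ → ℕ := fun b => if h : b < B then f b h else 0 with hgdef
    set J : Finset ℕ := (Finset.range B).image g with hJdef
    have hmono : ∀ b b', b < B → b' < B → b < b' → g b < g b' := by
      intro b b' hb hb' hlt
      have h1 : g b ≤ b * (L+1) + L := by
        rw [hgdef]; simp only [dif_pos hb]; exact hf2 b hb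
      have h2 : b' * (L+1) ≤ g b' := by
        rw [hgdef]; simp only [dif_pos hb']; exact hf1 b' hb'
      have h3 : b * (L+1) + L < b' * (L+1) := by
        calc b * (L+1) + L < (b+1) * (L+1) := by ring_nf; omega
        _ ≤ b' * (L+1) := Nat.mul_le_mul_right _ (by omega)
      omega
    have hginj : Set.InjOn g (Finset.range B) := by
      intro b hb b' hb' heq
      simp only [Finset.coe_range, Set.mem_Iio] at hb hb'
      rcases lt_trichotomy b b' with h | h | h
      · exact absurd heq (Nat.ne_of_lt (hmono b b' hb hb' h))
      · exact h
      · exact absurd heq.symm (Nat.ne_of_lt (hmono b' b hb' hb h))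
    have hJcard : J.card = B := by
      rw [hJdef, Finset.card_image_of_injOn hginj, Finset.card_range]
    have hJsub : J ⊆ Finset.range k := by
      intro j hj
      rw [hJdef, Finset.mem_image] at hj
      obtain ⟨b, hb, rfl⟩ := hj
      rw [Finset.mem_range] at hb
      rw [Finset.mem_range]
      have h1 : g b ≤ b * (L+1) + L := by
        rw [hgdef]; simp only [dif_pos hb]; exact hf2 b hb
      have hbI : b * (L+1) ≤ I := by
        have hble : b ≤ I / (L+1) := by
          rw [hBdef] at hb; omega
        calc b * (L+1) ≤ (I / (L+1)) * (L+1) := Nat.mul_le_mul_right _ hble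
        _ ≤ I := Nat.div_mul_le_self I (L+1)
      -- g b ≤ I + L = k/3 + Nat.log 10 q + 3 < k
      have : g b ≤ I + L := by omega
      rw [hLdef] at this
      omega
    have hJgood : ∀ j ∈ J, 1/20 ≤ nrm ((10:ℝ)^j * θ) := by
      intro j hj
      rw [hJdef, Finset.mem_image] at hj
      obtain ⟨b, hb, rfl⟩ := hj
      rw [Finset.mem_range] at hb
      rw [hgdef]; simp only [dif_pos hb]; exact hf3 b hb
    -- product bound
    have hprodsplit : ∏ i ∈ Finset.range k,
        ‖∑ d ∈ (Finset.range 10).filter (fun d => d ≠ a₀), e ((d:ℝ) * (10^i * θ))‖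
        ≤ 9^(k - B) * 8^B := by
      rw [← Finset.prod_sdiff hJsub]
      apply mul_le_mul
      · calc ∏ i ∈ Finset.range k \ J, ‖∑ d ∈ (Finset.range 10).filter (fun d => d ≠ a₀), e ((d:ℝ) * (10^i * θ))‖
            ≤ ∏ _i ∈ Finset.range k \ J, (9:ℝ) :=
              Finset.prod_le_prod (fun i _ => hTnonneg i) (fun i _ => T_le_nine a₀ _ ha₀)
        _ = 9^(k - B) := by
            rw [Finset.prod_const, Finset.card_sdiff_of_subset hJsub, Finset.card_range, hJcard]
      · calc ∏ i ∈ J, ‖∑ d ∈ (Finset.range 10).filter (fun d => d ≠ a₀), e ((d:ℝ) * (10^i * θ))‖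
            ≤ ∏ _i ∈ J, (8:ℝ) :=
              Finset.prod_le_prod (fun i _ => hTnonneg i) (fun i hi => T_le_eight ha₀ (hJgood i hi))
        _ = 8^B := by rw [Finset.prod_const, hJcard]
      · exact Finset.prod_nonneg (fun i _ => hTnonneg i)
      · positivity
    have hBk : B ≤ k := by
      have h := Finset.card_le_card hJsub
      rw [hJcard, Finset.card_range] at h
      exact h
    have hFb : F a₀ k θ ≤ (8/9 : ℝ)^B := by
      rw [hfact]
      have h9pos : (0:ℝ) < 9^k := by positivity
      calc (1/9^k : ℝ) * ∏ i ∈ Finset.range k,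
          ‖∑ d ∈ (Finset.range 10).filter (fun d => d ≠ a₀), e ((d:ℝ) * (10^i * θ))‖
          ≤ (1/9^k : ℝ) * (9^(k-B) * 8^B) := by
            apply mul_le_mul_of_nonneg_left hprodsplit (by positivity)
      _ = (8/9 : ℝ)^B := by
          rw [div_pow]
          rw [show (9:ℝ)^(k-B) = 9^k / 9^B by
            rw [eq_div_iff (by positivity), ← pow_add]
            congr 1
            omega]
          field_simp
    -- (8/9)^B ≤ exp(-B/9)
    have hexpB : (8/9 : ℝ)^B ≤ Real.exp (-(B:ℝ)/9) := by
      have h89 : (8/9 : ℝ) ≤ Real.exp (-(1:ℝ)/9) := by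
        have := Real.add_one_le_exp (-(1:ℝ)/9)
        linarith
      calc (8/9 : ℝ)^B ≤ (Real.exp (-(1:ℝ)/9))^B :=
            pow_le_pow_left₀ (by norm_num) h89 B
      _ = Real.exp (-(B:ℝ)/9) := by
          rw [← Real.exp_nat_mul]
          congr 1
          ring
    -- B lower bound : B ≥ k/(20 ℓ)
    clear_value q θ I L g J
    clear hprodsplit hJgood hJsub hJcard hginj hmono hf3 hf2 hf1 hgdef hJdef
    clear f g J hfar hfact hTnonneg hF1 hLpow hco hqY hη
    have hIB : (I:ℝ) + 1 ≤ (B:ℝ) * ((L:ℝ)+1) := by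
      have h1 : I < (L+1) * B := by
        have h2 := Nat.div_add_mod I (L+1)
        have h3 : I % (L+1) < L+1 := Nat.mod_lt _ (by omega)
        calc I = (L+1) * (I/(L+1)) + I % (L+1) := h2.symm
        _ < (L+1) * (I/(L+1)) + (L+1) := by omega
        _ = (L+1) * B := by rw [hBdef]; ring
      have h2 : (I + 1 : ℕ) ≤ (L+1) * B := h1
      calc (I:ℝ) + 1 = ((I + 1 : ℕ) : ℝ) := by push_cast; ring
      _ ≤ (((L+1) * B : ℕ) : ℝ) := by exact_mod_cast h2
      _ = (B:ℝ) * ((L:ℝ)+1) := by push_cast; ring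
    have hkI : (k:ℝ)/3 ≤ (I:ℝ) + 1 := by
      have : k ≤ 3 * I + 2 := by omega
      have := (Nat.cast_le (α := ℝ)).mpr this
      push_cast at this
      linarith
    have hLℓ : ((L:ℝ)+1) ≤ 6.5 * ℓ := by
      have hpowlog : (10:ℕ)^(Nat.log 10 q) ≤ q := Nat.pow_log_le_self 10 hq0
      have hpowlogR : (10:ℝ)^(Nat.log 10 q) ≤ (q:ℝ) := by exact_mod_cast hpowlog
      have hloglog : (Nat.log 10 q : ℝ) * Real.log 10 ≤ ℓ := by
        have := Real.log_le_log (by positivity) hpowlogR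
        rw [Real.log_pow] at this
        rw [hℓdef]
        exact this
      have hnn : (0:ℝ) ≤ (Nat.log 10 q : ℝ) := Nat.cast_nonneg _
      have h2n : 2 * (Nat.log 10 q : ℝ) ≤ ℓ := by
        have := mul_le_mul_of_nonneg_left (le_of_lt hlog10lo) hnn
        linarith
      rw [hLdef]
      push_cast
      linarith
    have hBlow : (k:ℝ) ≤ 20 * (B:ℝ) * ℓ := by
      have hB0 : (0:ℝ) ≤ (B:ℝ) := Nat.cast_nonneg _
      have h1 : (k:ℝ)/3 ≤ (B:ℝ) * ((L:ℝ)+1) := le_trans hkI hIB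
      have h2 : (B:ℝ) * ((L:ℝ)+1) ≤ (B:ℝ) * (6.5 * ℓ) :=
        mul_le_mul_of_nonneg_left hLℓ hB0
      linarith
    -- final comparison
    have hfinal : Real.exp (-(B:ℝ)/9) ≤ Real.exp (-(1/501) * Real.log ((10:ℝ)^k) / ℓ) := by
      apply Real.exp_le_exp.mpr
      rw [hlogYeq]
      have hlog10nn : (0:ℝ) ≤ Real.log 10 := by linarith
      have hBl0 : (0:ℝ) ≤ 20 * (B:ℝ) * ℓ := by
        have hB0 : (0:ℝ) ≤ (B:ℝ) := Nat.cast_nonneg _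
        nlinarith
      have hkl : (k:ℝ) * Real.log 10 ≤ (20*(B:ℝ)*ℓ) * 2.7725888 :=
        mul_le_mul hBlow (le_of_lt hlog10hi) hlog10nn hBl0
      rw [div_le_div_iff₀ (by norm_num) hℓpos]
      linarith [hkl]
    calc F a₀ k θ ≤ (8/9 : ℝ)^B := hFb
    _ ≤ Real.exp (-(B:ℝ)/9) := hexpB
    _ ≤ Real.exp (-(1/501) * Real.log ((10:ℝ)^k) / ℓ) := hfinal
    _ ≤ 3 * Real.exp (-(1/501) * Real.log ((10:ℝ)^k) / ℓ) := by
        linarith [Real.exp_pos (-(1/501) * Real.log ((10:ℝ)^k) / ℓ)]
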